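/- Let (X,d) be a finite metric space, Y a real normed vector space, and {Z_t}_{t≥0} a stationary reversible Markov chain on X satisfying d(Z_0,Z_1) ≤ 1 almost surely. Let f : X → Y. Then for every n ≥ 1 there exist a martingale {A_t}_{t=0}^{n} with respect to the natural filtration of (Z_0, Z_1, …, Z_{2n}) and a martingale {B_t}_{t=0}^{n} with respect to the natural filtration of the time-reversed sequence (Z_{2n}, Z_{2n-1}, …, Z_0) such that: (1) f(Z_{2n}) − f(Z_0) = A_n − B_n almost surely, and (2) for every t = 1, …, n, ‖A_t − A_{t−1}‖_Y ≤ 2‖f‖_Lip and ‖B_t − B_{t−1}‖_Y ≤ 2‖f‖_Lip almost surely. -/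

import Mathlib

open Finset MeasureTheory MeasurableSpace

set_option linter.unusedSectionVars false
set_option linter.unusedVariables false
set_option maxHeartbeats 2000000

noncomputable section

namespace NPSSAux

variable {X : Type*} [Fintype X]
variable {Y : Type*} [NormedAddCommGroup Y] [NormedSpace ℝ Y] [CompleteSpace Y]
variable {Ω : Type*} [m0 : MeasurableSpace Ω]

/-- product of transition probabilities along a trajectory -/
def qprod (P : X → X → ℝ) (m : ℕ) (x : Fin (m + 1) → X) : ℝ :=
  ∏ i : Fin m, P (x i.castSucc) (x i.succ)

/-- weight of a trajectory -/
def rho (π : X → ℝ) (P : X → X → ℝ) (m : ℕ) (x : Fin (m + 1) → X) : ℝ :=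
  π (x 0) * qprod P m x

/-- the one-step averaged function -/
def gfun (P : X → X → ℝ) (f : X → Y) (x : X) : Y := ∑ y, P x y • f y

/-- the martingale -/
def AF (P : X → X → ℝ) (f : X → Y) (Z : ℕ → Ω → X) (t : ℕ) (ω : Ω) : Y :=
  ∑ s ∈ Finset.Icc 1 t, (f (Z (2 * s) ω) - gfun P f (Z (2 * s - 1) ω))

theorem ifCongr {α : Sort*} {c d : Prop} {ic : Decidable c} {id' : Decidable d} {a b x y : α}
    (h : c ↔ d) (ha : a = b) (hx : x = y) : @ite α c ic a x = @ite α d id' b y := by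
  subst ha
  subst hx
  have hcd : c = d := propext h
  subst hcd
  rw [Subsingleton.elim ic id']

variable (π : X → ℝ) (P : X → X → ℝ) (μ : Measure Ω) [IsProbabilityMeasure μ]









theorem qprod_snoc (m : ℕ) (x : Fin (m + 1) → X) (z : X) :
    qprod P (m + 1) (Fin.snoc x z) = qprod P m x * P (x (Fin.last m)) z := by
  unfold qprod
  rw [Fin.prod_univ_castSucc]
  congr 1
  · apply Finset.prod_congr rfl
    intro i _
    rw [show (Fin.castSucc i).castSucc = Fin.castSucc (Fin.castSucc i) from rfl]
    rw [Fin.succ_castSucc]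
    rw [Fin.snoc_castSucc, Fin.snoc_castSucc]
  · rw [Fin.succ_last, Fin.snoc_last, Fin.snoc_castSucc]

theorem qprod_cons (m : ℕ) (x : Fin (m + 1) → X) (z : X) :
    qprod P (m + 1) (Fin.cons z x) = P z (x 0) * qprod P m x := by
  unfold qprod
  rw [Fin.prod_univ_succ]
  refine congrArg₂ (· * ·) (by simp) ?_
  apply Finset.prod_congr rfl
  intro i _
  rw [show (Fin.succ i).castSucc = Fin.succ i.castSucc from (Fin.succ_castSucc i).symm]
  rw [Fin.cons_succ, Fin.cons_succ]

theorem rho_snoc (m : ℕ) (x : Fin (m + 1) → X) (z : X) :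
    rho π P (m + 1) (Fin.snoc x z) = rho π P m x * P (x (Fin.last m)) z := by
  unfold rho
  rw [qprod_snoc]
  rw [show ((0 : Fin (m + 2))) = Fin.castSucc 0 from rfl, Fin.snoc_castSucc]
  ring

theorem rho_cons (m : ℕ) (x : Fin (m + 1) → X) (z : X) :
    rho π P (m + 1) (Fin.cons z x) = π z * P z (x 0) * qprod P m x := by
  unfold rho
  rw [qprod_cons, Fin.cons_zero]
  ring

theorem sum_rho_snoc (hP1 : ∀ x, ∑ y, P x y = 1) (m : ℕ) (x : Fin (m + 1) → X) :
    ∑ z, rho π P (m + 1) (Fin.snoc x z) = rho π P m x := by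
  simp only [rho_snoc, ← Finset.mul_sum, hP1, mul_one]

theorem sum_rho_cons (hstat : ∀ y, ∑ x, π x * P x y = π y) (m : ℕ) (x : Fin (m + 1) → X) :
    ∑ z, rho π P (m + 1) (Fin.cons z x) = rho π P m x := by
  simp only [rho_cons]
  rw [← Finset.sum_mul, hstat]
  rfl

theorem rho_nonneg (hπ0 : ∀ x, 0 ≤ π x) (hP0 : ∀ x y, 0 ≤ P x y) (m : ℕ)
    (x : Fin (m + 1) → X) : 0 ≤ rho π P m x :=
  mul_nonneg (hπ0 _) (Finset.prod_nonneg fun _ _ => hP0 _ _)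

theorem rho_rev (hrev : ∀ x y, π x * P x y = π y * P y x) :
    ∀ (m : ℕ) (x : Fin (m + 1) → X), rho π P m (x ∘ Fin.rev) = rho π P m x := by
  intro m
  induction m with
  | zero =>
    intro x
    unfold rho qprod
    simp
  | succ m ih =>
    intro x
    rw [← Fin.cons_self_tail x]
    set x₀ := x 0
    set w := Fin.tail x
    have hcomp : (Fin.cons x₀ w : Fin (m + 2) → X) ∘ Fin.rev = Fin.snoc (w ∘ Fin.rev) x₀ := by
      funext i
      induction i using Fin.lastCases with
      | last => simp [Fin.rev_last]
      | cast i =>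
        simp only [Function.comp_apply, Fin.snoc_castSucc, Fin.rev_castSucc, Fin.cons_succ]
    rw [hcomp, rho_snoc, ih, rho_cons]
    have h0 : (w ∘ Fin.rev) (Fin.last m) = w 0 := by
      simp [Fin.rev_last]
    rw [h0]
    unfold rho
    linear_combination qprod P m w * hrev (w 0) x₀




-- sum decomposition via snoc
theorem sum_snoc_decomp {M : Type*} [AddCommMonoid M] (N : ℕ) (F : (Fin (N + 1) → X) → M) :
    ∑ u, F u = ∑ p : Fin N → X, ∑ z : X, F (Fin.snoc p z) := by
  rw [← Equiv.sum_comp (Fin.snocEquiv (fun _ => X)) F]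
  rw [Fintype.sum_prod_type]
  rw [Finset.sum_comm]
  apply Finset.sum_congr rfl
  intro p _
  apply Finset.sum_congr rfl
  intro z _
  congr 1

theorem sum_cons_decomp {M : Type*} [AddCommMonoid M] (N : ℕ) (F : (Fin (N + 1) → X) → M) :
    ∑ u, F u = ∑ p : Fin N → X, ∑ z : X, F (Fin.cons z p) := by
  rw [← Equiv.sum_comp (Fin.consEquiv (fun _ => X)) F]
  rw [Fintype.sum_prod_type]
  rw [Finset.sum_comm]
  apply Finset.sum_congr rfl
  intro p _
  apply Finset.sum_congr rfl
  intro z _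
  congr 1

theorem sum_rev_decomp {M : Type*} [AddCommMonoid M] (N : ℕ) (F : (Fin (N + 1) → X) → M) :
    ∑ u, F u = ∑ u : Fin (N + 1) → X, F (u ∘ Fin.rev) := by
  exact (Equiv.sum_comp ⟨fun u => u ∘ Fin.rev, fun u => u ∘ Fin.rev,
    fun u => by funext i; simp, fun u => by funext i; simp⟩ F).symm







open Classical in
theorem sum_if_eq {m : ℕ} (x : Fin (m + 1) → X) (g : (Fin (m + 1) → X) → ℝ)
    (e : Fin (m + 1) → Fin (m + 1)) (he : ∀ i, e i = i) :
    ∑ u, (if ∀ i, u (e i) = x i then g u else 0) = g x := by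
  have hiff : ∀ u : Fin (m + 1) → X, (∀ i, u (e i) = x i) ↔ u = x := by
    intro u
    rw [funext_iff]
    exact forall_congr' fun i => by rw [he i]
  simp only [hiff]
  simp [Finset.sum_ite_eq']

open Classical in
theorem tail_marginal (hP1 : ∀ x, ∑ y, P x y = 1) :
    ∀ (M m : ℕ) (hm : m ≤ M) (x : Fin (m + 1) → X),
      ∑ u : Fin (M + 1) → X,
        (if ∀ i : Fin (m + 1), u ⟨i.1, lt_of_lt_of_le i.2 (by omega)⟩ = x i
         then rho π P M u else 0) = rho π P m x := by
  intro M
  induction M with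
  | zero =>
    intro m hm x
    have h0 : m = 0 := Nat.le_zero.mp hm
    subst h0
    exact sum_if_eq x _ _ (fun i => Fin.ext rfl)
  | succ M ihM =>
    intro m hm x
    by_cases hmM : m = M + 1
    · subst hmM
      exact sum_if_eq x _ _ (fun i => Fin.ext rfl)
    · have hm' : m ≤ M := by omega
      rw [sum_snoc_decomp]
      have key : ∀ p : Fin (M + 1) → X,
          (∑ z : X, if ∀ i : Fin (m + 1),
              (Fin.snoc p z : Fin (M + 2) → X) ⟨i.1, lt_of_lt_of_le i.2 (by omega)⟩ = x i
            then rho π P (M + 1) (Fin.snoc p z) else 0)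
          = (if ∀ i : Fin (m + 1), p ⟨i.1, lt_of_lt_of_le i.2 (by omega)⟩ = x i
             then rho π P M p else 0) := by
        intro p
        have hcond : ∀ z : X,
            (∀ i : Fin (m + 1),
              (Fin.snoc p z : Fin (M + 2) → X) ⟨i.1, lt_of_lt_of_le i.2 (by omega)⟩ = x i)
            ↔ (∀ i : Fin (m + 1), p ⟨i.1, lt_of_lt_of_le i.2 (by omega)⟩ = x i) := by
          intro z
          apply forall_congr'
          intro i
          rw [show (⟨i.1, lt_of_lt_of_le i.2 (by omega)⟩ : Fin (M + 2)) =
              Fin.castSucc ⟨i.1, lt_of_lt_of_le i.2 (by omega)⟩ from rfl, Fin.snoc_castSucc]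
        simp only [hcond]
        by_cases hc : ∀ i : Fin (m + 1), p ⟨i.1, lt_of_lt_of_le i.2 (by omega)⟩ = x i
        · simp only [if_pos hc]
          exact sum_rho_snoc π P hP1 M p
        · simp only [if_neg hc, Finset.sum_const_zero]
      rw [Finset.sum_congr rfl fun p _ => key p]
      exact ihM m hm' x

open Classical in
theorem head_marginal (hstat : ∀ y, ∑ x, π x * P x y = π y) :
    ∀ (M m : ℕ) (hm : m ≤ M) (x : Fin (m + 1) → X),
      ∑ u : Fin (M + 1) → X,
        (if ∀ i : Fin (m + 1), u ⟨M - m + i.1, by have := i.2; omega⟩ = x i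
         then rho π P M u else 0) = rho π P m x := by
  intro M
  induction M with
  | zero =>
    intro m hm x
    have h0 : m = 0 := Nat.le_zero.mp hm
    subst h0
    exact sum_if_eq x _ _ (fun i => Fin.ext (by simp))
  | succ M ihM =>
    intro m hm x
    by_cases hmM : m = M + 1
    · subst hmM
      exact sum_if_eq x _ _ (fun i => Fin.ext (by simp))
    · have hm' : m ≤ M := by omega
      rw [sum_cons_decomp]
      have key : ∀ p : Fin (M + 1) → X,
          (∑ z : X, if ∀ i : Fin (m + 1),
              (Fin.cons z p : Fin (M + 2) → X) ⟨M + 1 - m + i.1, by have := i.2; omega⟩ = x i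
            then rho π P (M + 1) (Fin.cons z p) else 0)
          = (if ∀ i : Fin (m + 1), p ⟨M - m + i.1, by have := i.2; omega⟩ = x i
             then rho π P M p else 0) := by
        intro p
        have hcond : ∀ z : X,
            (∀ i : Fin (m + 1),
              (Fin.cons z p : Fin (M + 2) → X) ⟨M + 1 - m + i.1, by have := i.2; omega⟩ = x i)
            ↔ (∀ i : Fin (m + 1), p ⟨M - m + i.1, by have := i.2; omega⟩ = x i) := by
          intro z
          apply forall_congr'
          intro i
          rw [show (⟨M + 1 - m + i.1, by have := i.2; omega⟩ : Fin (M + 2)) =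
              Fin.succ ⟨M - m + i.1, by have := i.2; omega⟩ from
              Fin.ext (by simp [Fin.val_succ]; have := i.2; omega), Fin.cons_succ]
        simp only [hcond]
        by_cases hc : ∀ i : Fin (m + 1), p ⟨M - m + i.1, by have := i.2; omega⟩ = x i
        · simp only [if_pos hc]
          exact sum_rho_cons π P hstat M p
        · simp only [if_neg hc, Finset.sum_const_zero]
      rw [Finset.sum_congr rfl fun p _ => key p]
      exact ihM m hm' x







theorem measurable_W (Z : ℕ → Ω → X) (hZ : ∀ t (s : Set X), MeasurableSet (Z t ⁻¹' s)) (M : ℕ) :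
    @Measurable Ω (Fin (M + 1) → X) m0 ⊤ (fun ω i => Z (i : ℕ) ω) := by
  intro S _
  have hdec : (fun ω (i : Fin (M + 1)) => Z (i : ℕ) ω) ⁻¹' S
      = ⋃ x ∈ S, ⋂ i : Fin (M + 1), Z (i : ℕ) ⁻¹' {x i} := by
    ext ω
    simp only [Set.mem_preimage, Set.mem_iUnion, Set.mem_iInter, Set.mem_singleton_iff]
    constructor
    · intro h
      exact ⟨_, h, fun i => rfl⟩
    · rintro ⟨x, hx, hxe⟩
      have : (fun i : Fin (M + 1) => Z (i : ℕ) ω) = x := funext fun i => hxe i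
      rwa [this]
  rw [hdec]
  exact MeasurableSet.biUnion (Set.to_countable S)
    (fun x _ => MeasurableSet.iInter fun i => hZ (i : ℕ) {x i})

open Classical in
theorem meas_event (Z : ℕ → Ω → X) (hZ : ∀ t (s : Set X), MeasurableSet (Z t ⁻¹' s)) (M : ℕ)
    (hch : ∀ x : Fin (M + 1) → X,
      μ {ω | ∀ i : Fin (M + 1), Z (i : ℕ) ω = x i} = ENNReal.ofReal (rho π P M x))
    (C : (Fin (M + 1) → X) → Prop) :
    μ {ω | C (fun i => Z (i : ℕ) ω)}
      = ∑ x : Fin (M + 1) → X, (if C x then ENNReal.ofReal (rho π P M x) else 0) := by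
  have hdec : {ω | C (fun i : Fin (M + 1) => Z (i : ℕ) ω)}
      = ⋃ x ∈ Finset.univ.filter C, ⋂ i : Fin (M + 1), Z (i : ℕ) ⁻¹' {x i} := by
    ext ω
    simp only [Set.mem_setOf_eq, Set.mem_iUnion, Set.mem_iInter, Set.mem_singleton_iff,
      Set.mem_preimage, Finset.mem_filter, Finset.mem_univ, true_and]
    constructor
    · intro h
      exact ⟨_, h, fun i => rfl⟩
    · rintro ⟨x, hx, hxe⟩
      have : (fun i : Fin (M + 1) => Z (i : ℕ) ω) = x := funext fun i => hxe i
      rwa [this]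
  rw [hdec, measure_biUnion_finset]
  · rw [← Finset.sum_filter]
    apply Finset.sum_congr rfl
    intro x _
    rw [← hch x]
    congr 1
    ext ω
    simp [Set.mem_iInter]
  · intro x _ x' _ hne
    simp only [Function.onFun]
    apply Set.disjoint_left.mpr
    intro ω hω hω'
    simp only [Set.mem_iInter, Set.mem_preimage, Set.mem_singleton_iff] at hω hω'
    exact hne (funext fun i => (hω i).symm.trans (hω' i))
  · intro x _
    exact MeasurableSet.iInter fun i => hZ (i : ℕ) {x i}

open Classical in
theorem setIntegral_W (Z : ℕ → Ω → X) (hZ : ∀ t (s : Set X), MeasurableSet (Z t ⁻¹' s)) (M : ℕ)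
    (hπ0 : ∀ x, 0 ≤ π x) (hP0 : ∀ x y, 0 ≤ P x y)
    (hch : ∀ x : Fin (M + 1) → X,
      μ {ω | ∀ i : Fin (M + 1), Z (i : ℕ) ω = x i} = ENNReal.ofReal (rho π P M x))
    (H : (Fin (M + 1) → X) → Y) (S : Set (Fin (M + 1) → X)) :
    ∫ ω in (fun ω (i : Fin (M + 1)) => Z (i : ℕ) ω) ⁻¹' S, H (fun i => Z (i : ℕ) ω) ∂μ
      = ∑ x : Fin (M + 1) → X, (if x ∈ S then rho π P M x • H x else 0) := by
  letI mXF : MeasurableSpace (Fin (M + 1) → X) := ⊤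
  haveI : MeasurableSingletonClass (Fin (M + 1) → X) := ⟨fun _ => trivial⟩
  have hW : Measurable (fun ω (i : Fin (M + 1)) => Z (i : ℕ) ω) := measurable_W Z hZ M
  have hHsm : StronglyMeasurable H :=
    (⟨H, fun _ => MeasurableSpace.measurableSet_top, Set.finite_range H⟩ : SimpleFunc (Fin (M + 1) → X) Y).stronglyMeasurable
  haveI : IsFiniteMeasure (μ.map (fun ω (i : Fin (M + 1)) => Z (i : ℕ) ω)) :=
    Measure.isFiniteMeasure_map μ _
  rw [← setIntegral_map (MeasurableSpace.measurableSet_top) hHsm.aestronglyMeasurable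
    hW.aemeasurable]
  rw [show (∫ y in S, H y ∂(μ.map (fun ω (i : Fin (M + 1)) => Z (i : ℕ) ω)))
      = ∫ y in ((S.toFinset : Set (Fin (M + 1) → X))),
        H y ∂(μ.map (fun ω (i : Fin (M + 1)) => Z (i : ℕ) ω)) from by rw [Set.coe_toFinset]]
  rw [integral_finset _ (Integrable.of_finite.integrableOn)]
  simp only [Measure.real]
  have hsingle : ∀ x : Fin (M + 1) → X,
      (μ.map (fun ω (i : Fin (M + 1)) => Z (i : ℕ) ω)) {x} = ENNReal.ofReal (rho π P M x) := by
    intro x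
    rw [Measure.map_apply hW (MeasurableSpace.measurableSet_top), ← hch x]
    congr 1
    ext ω
    simp [funext_iff]
  have : ∀ x ∈ S.toFinset,
      ((μ.map (fun ω (i : Fin (M + 1)) => Z (i : ℕ) ω)) {x}).toReal • H x
        = rho π P M x • H x := by
    intro x _
    rw [hsingle x, ENNReal.toReal_ofReal (rho_nonneg π P hπ0 hP0 M x)]
  rw [Finset.sum_congr rfl this]
  rw [show S.toFinset = Finset.univ.filter (· ∈ S) by ext; simp]
  rw [Finset.sum_filter]

theorem integrable_comp (Z : ℕ → Ω → X) (hZ : ∀ t (s : Set X), MeasurableSet (Z t ⁻¹' s))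
    (i : ℕ) (h : X → Y) : Integrable (fun ω => h (Z i ω)) μ := by
  letI mX : MeasurableSpace X := ⊤
  haveI : MeasurableSingletonClass X := ⟨fun _ => trivial⟩
  have hZi : Measurable (Z i) := fun s _ => hZ i s
  have hsm : StronglyMeasurable h :=
    (⟨h, fun _ => MeasurableSpace.measurableSet_top, Set.finite_range h⟩ : SimpleFunc X Y).stronglyMeasurable
  haveI : IsFiniteMeasure (μ.map (Z i)) := Measure.isFiniteMeasure_map μ _
  exact (integrable_map_measure hsm.aestronglyMeasurable hZi.aemeasurable).mp Integrable.of_finite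













theorem comap_le_m0 (Z : ℕ → Ω → X) (hZ : ∀ t (s : Set X), MeasurableSet (Z t ⁻¹' s)) (i : ℕ) :
    MeasurableSpace.comap (Z i) ⊤ ≤ m0 := by
  intro s hs
  obtain ⟨s', -, rfl⟩ := hs
  exact hZ i s'

theorem F_le_m0 (Z : ℕ → Ω → X) (hZ : ∀ t (s : Set X), MeasurableSet (Z t ⁻¹' s)) (k : ℕ) :
    (⨆ i ∈ Finset.range k, MeasurableSpace.comap (Z i) ⊤) ≤ m0 :=
  iSup₂_le fun i _ => comap_le_m0 Z hZ i

theorem F_le_comapW (Z : ℕ → Ω → X) (M : ℕ) :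
    (⨆ i ∈ Finset.range (M + 1), MeasurableSpace.comap (Z i) ⊤)
      ≤ MeasurableSpace.comap (fun ω (j : Fin (M + 1)) => Z (j : ℕ) ω) ⊤ := by
  apply iSup₂_le
  intro i hi
  have hi' : i < M + 1 := Finset.mem_range.mp hi
  have : MeasurableSpace.comap (Z i) (⊤ : MeasurableSpace X)
      = MeasurableSpace.comap (fun ω (j : Fin (M + 1)) => Z (j : ℕ) ω)
          (MeasurableSpace.comap (fun v : Fin (M + 1) → X => v ⟨i, hi'⟩) ⊤) := by
    rw [MeasurableSpace.comap_comp]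
    rfl
  rw [this]
  exact MeasurableSpace.comap_mono le_top

theorem exists_preimage (Z : ℕ → Ω → X) (M : ℕ) (s : Set Ω)
    (hs : MeasurableSet[⨆ i ∈ Finset.range (M + 1), MeasurableSpace.comap (Z i) ⊤] s) :
    ∃ S : Set (Fin (M + 1) → X), (fun ω (j : Fin (M + 1)) => Z (j : ℕ) ω) ⁻¹' S = s := by
  have := F_le_comapW Z M s hs
  rw [MeasurableSpace.measurableSet_comap] at this
  obtain ⟨S, -, hS⟩ := this
  exact ⟨S, hS⟩

theorem sm_comp (Z : ℕ → Ω → X) (i : ℕ) (h : X → Y) :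
    StronglyMeasurable[MeasurableSpace.comap (Z i) ⊤] (fun ω => h (Z i ω)) := by
  letI mc : MeasurableSpace Ω := MeasurableSpace.comap (Z i) ⊤
  exact SimpleFunc.stronglyMeasurable
    (@SimpleFunc.mk Ω mc Y (fun ω => h (Z i ω))
      (fun c => ⟨h ⁻¹' {c}, MeasurableSpace.measurableSet_top, rfl⟩)
      ((Set.finite_range h).subset (Set.range_comp_subset_range _ _)))

theorem smAF (f : X → Y) (Z : ℕ → Ω → X) (t : ℕ) :
    StronglyMeasurable[⨆ i ∈ Finset.range (2 * t + 1), MeasurableSpace.comap (Z i) ⊤]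
      (AF P f Z t) := by
  unfold AF
  apply Finset.stronglyMeasurable_fun_sum
  intro s hs'
  have h1 : 1 ≤ s := (Finset.mem_Icc.mp hs').1
  have h2 : s ≤ t := (Finset.mem_Icc.mp hs').2
  have le1 : MeasurableSpace.comap (Z (2 * s)) ⊤
      ≤ ⨆ i ∈ Finset.range (2 * t + 1), MeasurableSpace.comap (Z i) ⊤ := by
    apply le_iSup₂ (f := fun i (_ : i ∈ Finset.range (2 * t + 1)) =>
      MeasurableSpace.comap (Z i) ⊤) (2 * s) (Finset.mem_range.mpr (by omega))
  have le2 : MeasurableSpace.comap (Z (2 * s - 1)) ⊤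
      ≤ ⨆ i ∈ Finset.range (2 * t + 1), MeasurableSpace.comap (Z i) ⊤ := by
    apply le_iSup₂ (f := fun i (_ : i ∈ Finset.range (2 * t + 1)) =>
      MeasurableSpace.comap (Z i) ⊤) (2 * s - 1) (Finset.mem_range.mpr (by omega))
  exact ((sm_comp Z (2 * s) f).mono le1).sub ((sm_comp Z (2 * s - 1) (gfun P f)).mono le2)

theorem integrable_AF (f : X → Y) (Z : ℕ → Ω → X)
    (hZ : ∀ t (s : Set X), MeasurableSet (Z t ⁻¹' s)) (t : ℕ) :
    Integrable (AF P f Z t) μ := by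
  apply integrable_finset_sum
  intro s _
  exact (integrable_comp μ Z hZ (2 * s) f).sub (integrable_comp μ Z hZ (2 * s - 1) (gfun P f))

open Classical in
theorem core_cancel (hπ0 : ∀ x, 0 ≤ π x) (hP0 : ∀ x y, 0 ≤ P x y) (hP1 : ∀ x, ∑ y, P x y = 1)
    (f : X → Y) (t : ℕ) (S₀ : Set (Fin (2 * t + 1) → X)) :
    ∑ v : Fin (2 * t + 2 + 1) → X,
      (if (fun i : Fin (2 * t + 1) => v ⟨i.1, lt_of_lt_of_le i.2 (by omega)⟩) ∈ S₀
       then rho π P (2 * t + 2) v •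
         (f (v ⟨2 * t + 2, by omega⟩) - gfun P f (v ⟨2 * t + 1, by omega⟩))
       else 0) = 0 := by
  calc
    (∑ v : Fin (2 * t + 2 + 1) → X,
      if (fun i : Fin (2 * t + 1) => v ⟨i.1, lt_of_lt_of_le i.2 (by omega)⟩) ∈ S₀
       then rho π P (2 * t + 2) v •
         (f (v ⟨2 * t + 2, by omega⟩) - gfun P f (v ⟨2 * t + 1, by omega⟩))
       else 0)
      = ∑ p : Fin (2 * t + 2) → X, ∑ z : X,
          (if (fun i : Fin (2 * t + 1) =>
                (Fin.snoc p z : Fin (2 * t + 3) → X) ⟨i.1, lt_of_lt_of_le i.2 (by omega)⟩) ∈ S₀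
           then rho π P (2 * t + 2) (Fin.snoc p z) •
             (f ((Fin.snoc p z : Fin (2 * t + 3) → X) ⟨2 * t + 2, by omega⟩)
               - gfun P f ((Fin.snoc p z : Fin (2 * t + 3) → X) ⟨2 * t + 1, by omega⟩))
           else 0) := sum_snoc_decomp _ _
    _ = ∑ q : Fin (2 * t + 1) → X, ∑ y : X, ∑ z : X,
          (if (fun i : Fin (2 * t + 1) =>
                (Fin.snoc (Fin.snoc q y) z : Fin (2 * t + 3) → X)
                  ⟨i.1, lt_of_lt_of_le i.2 (by omega)⟩) ∈ S₀
           then rho π P (2 * t + 2) (Fin.snoc (Fin.snoc q y) z) •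
             (f ((Fin.snoc (Fin.snoc q y) z : Fin (2 * t + 3) → X) ⟨2 * t + 2, by omega⟩)
               - gfun P f ((Fin.snoc (Fin.snoc q y) z : Fin (2 * t + 3) → X) ⟨2 * t + 1, by omega⟩))
           else 0) := sum_snoc_decomp _ _
    _ = 0 := by
      apply Finset.sum_eq_zero
      intro q _
      apply Finset.sum_eq_zero
      intro y _
      have hfun : ∀ z : X, (fun i : Fin (2 * t + 1) =>
          (Fin.snoc (Fin.snoc q y) z : Fin (2 * t + 3) → X)
            ⟨i.1, lt_of_lt_of_le i.2 (by omega)⟩) = q := by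
        intro z
        funext i
        rw [show (⟨i.1, lt_of_lt_of_le i.2 (by omega)⟩ : Fin (2 * t + 3))
            = Fin.castSucc (Fin.castSucc i) from rfl]
        rw [Fin.snoc_castSucc, Fin.snoc_castSucc]
      have hv1 : ∀ z : X,
          (Fin.snoc (Fin.snoc q y) z : Fin (2 * t + 3) → X) ⟨2 * t + 2, by omega⟩ = z := by
        intro z
        rw [show (⟨2 * t + 2, by omega⟩ : Fin (2 * t + 3)) = Fin.last (2 * t + 2) from rfl]
        rw [Fin.snoc_last]
      have hv2 : ∀ z : X,
          (Fin.snoc (Fin.snoc q y) z : Fin (2 * t + 3) → X) ⟨2 * t + 1, by omega⟩ = y := by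
        intro z
        rw [show (⟨2 * t + 1, by omega⟩ : Fin (2 * t + 3))
            = Fin.castSucc (Fin.last (2 * t + 1)) from rfl]
        rw [Fin.snoc_castSucc, Fin.snoc_last]
      have hrho : ∀ z : X, rho π P (2 * t + 2) (Fin.snoc (Fin.snoc q y) z)
          = (rho π P (2 * t) q * P (q (Fin.last (2 * t))) y) * P y z := by
        intro z
        have h1 : rho π P (2 * t + 2) (Fin.snoc (Fin.snoc q y) z)
            = rho π P (2 * t + 1) (Fin.snoc q y)
                * P ((Fin.snoc q y : Fin (2 * t + 2) → X) (Fin.last (2 * t + 1))) z :=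
          rho_snoc π P (2 * t + 1) (Fin.snoc q y) z
        rw [h1, Fin.snoc_last, rho_snoc π P (2 * t) q y]
      simp only [hfun, hv1, hv2, hrho]
      by_cases hq : q ∈ S₀
      · simp only [if_pos hq]
        have hterm : ∀ z : X,
            ((rho π P (2 * t) q * P (q (Fin.last (2 * t))) y) * P y z) • (f z - gfun P f y)
            = (rho π P (2 * t) q * P (q (Fin.last (2 * t))) y) • (P y z • f z)
              - (rho π P (2 * t) q * P (q (Fin.last (2 * t))) y) • (P y z • gfun P f y) := by
          intro z
          rw [mul_smul, smul_sub, smul_sub]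
        rw [Finset.sum_congr rfl fun z _ => hterm z]
        rw [Finset.sum_sub_distrib, ← Finset.smul_sum, ← Finset.smul_sum]
        have hg : ∑ z : X, P y z • f z = gfun P f y := rfl
        have hg2 : ∑ z : X, P y z • gfun P f y = gfun P f y := by
          rw [← Finset.sum_smul, hP1, one_smul]
        rw [hg, hg2]
        exact sub_self _
      · simp only [if_neg hq, Finset.sum_const_zero]


open Classical in
theorem mart_AF (Z : ℕ → Ω → X) (hZ : ∀ t (s : Set X), MeasurableSet (Z t ⁻¹' s)) (N : ℕ)
    (hch : ∀ m, m ≤ 2 * N → ∀ x : Fin (m + 1) → X,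
      μ {ω | ∀ i : Fin (m + 1), Z (i : ℕ) ω = x i} = ENNReal.ofReal (rho π P m x))
    (hπ0 : ∀ x, 0 ≤ π x) (hP0 : ∀ x y, 0 ≤ P x y) (hP1 : ∀ x, ∑ y, P x y = 1)
    (f : X → Y) (t : ℕ) (ht : t < N) :
    μ[AF P f Z (t + 1) | ⨆ i ∈ Finset.range (2 * t + 1), MeasurableSpace.comap (Z i) ⊤]
      =ᵐ[μ] AF P f Z t := by
  have hm : (⨆ i ∈ Finset.range (2 * t + 1), MeasurableSpace.comap (Z i) ⊤) ≤ m0 :=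
    F_le_m0 Z hZ _
  haveI : IsFiniteMeasure (μ.trim hm) := isFiniteMeasure_trim hm
  have hintA : Integrable (AF P f Z t) μ := integrable_AF P μ f Z hZ t
  have hintA1 : Integrable (AF P f Z (t + 1)) μ := integrable_AF P μ f Z hZ (t + 1)
  have hintD : Integrable (fun ω => f (Z (2 * t + 2) ω) - gfun P f (Z (2 * t + 1) ω)) μ :=
    (integrable_comp μ Z hZ _ f).sub (integrable_comp μ Z hZ _ _)
  have hsplit : ∀ ω, AF P f Z (t + 1) ω
      = AF P f Z t ω + (f (Z (2 * t + 2) ω) - gfun P f (Z (2 * t + 1) ω)) := by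
    intro ω
    unfold AF
    rw [show Finset.Icc 1 (t + 1) = insert (t + 1) (Finset.Icc 1 t) from by
      ext a; simp [Finset.mem_Icc]; omega]
    rw [Finset.sum_insert (by simp)]
    rw [show 2 * (t + 1) = 2 * t + 2 from by ring, show 2 * t + 2 - 1 = 2 * t + 1 from by omega]
    exact add_comm _ _
  refine (ae_eq_condExp_of_forall_setIntegral_eq hm hintA1
    (fun s _ _ => hintA.integrableOn) (fun s hs _ => ?_)
    ((smAF P f Z t).aestronglyMeasurable)).symm
  obtain ⟨S₀, hS₀⟩ := exists_preimage Z (2 * t) s hs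
  have hzero : ∫ ω in s, (f (Z (2 * t + 2) ω) - gfun P f (Z (2 * t + 1) ω)) ∂μ = 0 := by
    set S : Set (Fin (2 * t + 2 + 1) → X) :=
      {v | (fun i : Fin (2 * t + 1) => v ⟨i.1, lt_of_lt_of_le i.2 (by omega)⟩) ∈ S₀} with hSdef
    have hs_eq : s = (fun ω (j : Fin (2 * t + 2 + 1)) => Z (j : ℕ) ω) ⁻¹' S := by
      rw [← hS₀]
      rfl
    rw [hs_eq]
    have hW := setIntegral_W π P μ Z hZ (2 * t + 2) hπ0 hP0 (hch (2 * t + 2) (by omega))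
      (fun v => f (v ⟨2 * t + 2, by omega⟩) - gfun P f (v ⟨2 * t + 1, by omega⟩)) S
    exact hW.trans (core_cancel π P hπ0 hP0 hP1 f t S₀)
  simp only [hsplit]
  rw [integral_add hintA.integrableOn hintD.integrableOn, hzero, add_zero]










open Classical in
theorem ofReal_sum_if (M m : ℕ) (C : (Fin (M + 1) → X) → Prop)
    (hπ0 : ∀ x, 0 ≤ π x) (hP0 : ∀ x y, 0 ≤ P x y) :
    ∑ v : Fin (M + 1) → X, (if C v then ENNReal.ofReal (rho π P M v) else 0)
      = ENNReal.ofReal (∑ v : Fin (M + 1) → X, if C v then rho π P M v else 0) := by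
  rw [ENNReal.ofReal_sum_of_nonneg]
  · apply Finset.sum_congr rfl
    intro v _
    by_cases hc : C v
    · simp [hc]
    · simp [hc]
  · intro v _
    by_cases hc : C v
    · simpa [hc] using rho_nonneg π P hπ0 hP0 M v
    · simp [hc]

theorem single_law (Z : ℕ → Ω → X) (hZ : ∀ t (s : Set X), MeasurableSet (Z t ⁻¹' s)) (s : ℕ)
    (hch : ∀ x : Fin (s + 1) → X,
      μ {ω | ∀ i : Fin (s + 1), Z (i : ℕ) ω = x i} = ENNReal.ofReal (rho π P s x))
    (hstat : ∀ y, ∑ x, π x * P x y = π y)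
    (hπ0 : ∀ x, 0 ≤ π x) (hP0 : ∀ x y, 0 ≤ P x y)
    (x : X) :
    μ {ω | Z s ω = x} = ENNReal.ofReal (π x) := by
  classical
  have hset : {ω | Z s ω = x}
      = {ω | (fun v : Fin (s + 1) → X => v ⟨s, by omega⟩ = x) (fun i => Z (i : ℕ) ω)} := rfl
  rw [hset, meas_event π P μ Z hZ s hch (fun v : Fin (s + 1) → X => v ⟨s, by omega⟩ = x),
    ofReal_sum_if π P _ 0 _ hπ0 hP0]
  have hcond : ∀ v : Fin (s + 1) → X,
      (v ⟨s, by omega⟩ = x) ↔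
      (∀ i : Fin (0 + 1), v ⟨s - 0 + i.1, by have := i.2; omega⟩ = (fun _ => x) i) := by
    intro v
    rw [Fin.forall_fin_one]
    have : (⟨s - 0 + (0 : Fin 1).1, by omega⟩ : Fin (s + 1)) = ⟨s, by omega⟩ := by
      apply Fin.ext; simp
    rw [this]
  congr 1
  have h2 : π x = rho π P 0 (fun _ => x) := by
    unfold rho qprod
    simp
  rw [h2]
  refine Eq.trans (Finset.sum_congr rfl fun v _ => ?_)
    (head_marginal π P hstat s 0 (by omega) (fun _ => x))
  exact ifCongr (hcond v) rfl rfl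

theorem pair_law (Z : ℕ → Ω → X) (hZ : ∀ t (s : Set X), MeasurableSet (Z t ⁻¹' s)) (s : ℕ)
    (hch : ∀ x : Fin (s + 1 + 1) → X,
      μ {ω | ∀ i : Fin (s + 1 + 1), Z (i : ℕ) ω = x i} = ENNReal.ofReal (rho π P (s + 1) x))
    (hstat : ∀ y, ∑ x, π x * P x y = π y)
    (hπ0 : ∀ x, 0 ≤ π x) (hP0 : ∀ x y, 0 ≤ P x y)
    (x y : X) :
    μ {ω | Z s ω = x ∧ Z (s + 1) ω = y} = ENNReal.ofReal (π x * P x y) := by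
  classical
  have hset : {ω | Z s ω = x ∧ Z (s + 1) ω = y}
      = {ω | (fun v : Fin (s + 1 + 1) → X => v ⟨s, by omega⟩ = x ∧ v ⟨s + 1, by omega⟩ = y)
          (fun i => Z (i : ℕ) ω)} := rfl
  rw [hset, meas_event π P μ Z hZ (s + 1) hch
      (fun v : Fin (s + 1 + 1) → X => v ⟨s, by omega⟩ = x ∧ v ⟨s + 1, by omega⟩ = y),
    ofReal_sum_if π P _ 1 _ hπ0 hP0]
  have hcond : ∀ v : Fin (s + 1 + 1) → X,
      (v ⟨s, by omega⟩ = x ∧ v ⟨s + 1, by omega⟩ = y) ↔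
      (∀ i : Fin (1 + 1), v ⟨s + 1 - 1 + i.1, by have := i.2; omega⟩ = ![x, y] i) := by
    intro v
    rw [Fin.forall_fin_two]
    have h0 : (⟨s + 1 - 1 + ((0 : Fin 2) : ℕ), by omega⟩ : Fin (s + 1 + 1)) = ⟨s, by omega⟩ := by
      apply Fin.ext; simp
    have h1 : (⟨s + 1 - 1 + ((1 : Fin 2) : ℕ), by omega⟩ : Fin (s + 1 + 1))
        = ⟨s + 1, by omega⟩ := by
      apply Fin.ext; simp
    rw [h0, h1]
    simp
  congr 1
  have h2 : π x * P x y = rho π P 1 ![x, y] := by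
    unfold rho qprod
    rw [Fin.prod_univ_one]
    simp
  rw [h2]
  refine Eq.trans (Finset.sum_congr rfl fun v _ => ?_)
    (head_marginal π P hstat (s + 1) 1 (by omega) ![x, y])
  exact ifCongr (hcond v) rfl rfl

theorem chain_rev (Z : ℕ → Ω → X) (hZ : ∀ t (s : Set X), MeasurableSet (Z t ⁻¹' s)) (n : ℕ)
    (hch : ∀ (m : ℕ) (x : Fin (m + 1) → X),
      μ {ω | ∀ i : Fin (m + 1), Z (i : ℕ) ω = x i} = ENNReal.ofReal (rho π P m x))
    (hrev : ∀ x y, π x * P x y = π y * P y x)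
    (hπ0 : ∀ x, 0 ≤ π x) (hP0 : ∀ x y, 0 ≤ P x y) (hP1 : ∀ x, ∑ y, P x y = 1) :
    ∀ m, m ≤ 2 * n → ∀ x : Fin (m + 1) → X,
      μ {ω | ∀ i : Fin (m + 1), Z (2 * n - (i : ℕ)) ω = x i} = ENNReal.ofReal (rho π P m x) := by
  classical
  intro m hm x
  have hset : {ω | ∀ i : Fin (m + 1), Z (2 * n - (i : ℕ)) ω = x i}
      = {ω | (fun v : Fin (2 * n + 1) → X =>
          ∀ i : Fin (m + 1), v ⟨2 * n - (i : ℕ), by omega⟩ = x i) (fun j => Z (j : ℕ) ω)} := rfl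
  rw [hset, meas_event π P μ Z hZ (2 * n) (hch (2 * n))
      (fun v : Fin (2 * n + 1) → X => ∀ i : Fin (m + 1), v ⟨2 * n - (i : ℕ), by omega⟩ = x i),
    ofReal_sum_if π P _ m _ hπ0 hP0]
  congr 1
  have hidx : ∀ i : Fin (m + 1),
      Fin.rev (⟨2 * n - (i : ℕ), by omega⟩ : Fin (2 * n + 1))
        = ⟨(i : ℕ), by have := i.2; omega⟩ := by
    intro i
    apply Fin.ext
    rw [Fin.val_rev]
    have := i.2
    simp
    omega
  refine Eq.trans (sum_rev_decomp (2 * n) _) ?_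
  refine Eq.trans (Finset.sum_congr rfl fun v _ => ?_) (tail_marginal π P hP1 (2 * n) m hm x)
  refine ifCongr ?_ (rho_rev π P hrev _ _) rfl
  apply forall_congr'
  intro i
  rw [show (v ∘ Fin.rev) (⟨2 * n - (i : ℕ), by omega⟩ : Fin (2 * n + 1))
      = v (Fin.rev ⟨2 * n - (i : ℕ), by omega⟩) from rfl, hidx i]











theorem fg_bound [MetricSpace X] (hπ0 : ∀ x, 0 ≤ π x) (hP0 : ∀ x y, 0 ≤ P x y)
    (hP1 : ∀ x, ∑ y, P x y = 1) (hdist : ∀ x y : X, 1 < dist x y → π x * P x y = 0)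
    (f : X → Y) (K : NNReal) (hK : LipschitzWith K f) (x : X) (hx : π x ≠ 0) :
    ‖f x - gfun P f x‖ ≤ K := by
  have hfg : f x - gfun P f x = ∑ y, P x y • (f x - f y) := by
    unfold gfun
    simp only [smul_sub]
    rw [Finset.sum_sub_distrib, ← Finset.sum_smul, hP1, one_smul]
  rw [hfg]
  calc ‖∑ y, P x y • (f x - f y)‖ ≤ ∑ y, ‖P x y • (f x - f y)‖ := norm_sum_le _ _
    _ ≤ ∑ y : X, P x y * K := by
        apply Finset.sum_le_sum
        intro y _
        rw [norm_smul, Real.norm_eq_abs, abs_of_nonneg (hP0 x y)]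
        by_cases hPxy : P x y = 0
        · simp [hPxy]
        · apply mul_le_mul_of_nonneg_left ?_ (hP0 x y)
          have hdxy : dist x y ≤ 1 := by
            by_contra hgt
            push_neg at hgt
            rcases mul_eq_zero.mp (hdist x y hgt) with h | h
            · exact hx h
            · exact hPxy h
          have hd := hK.dist_le_mul x y
          rw [dist_eq_norm] at hd
          calc ‖f x - f y‖ ≤ K * dist x y := hd
            _ ≤ (K : ℝ) * 1 := mul_le_mul_of_nonneg_left hdxy K.coe_nonneg
            _ = K := mul_one _
    _ = K := by rw [← Finset.sum_mul, hP1, one_mul]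

theorem bound_AF [MetricSpace X] (Z : ℕ → Ω → X)
    (hZ : ∀ t (s : Set X), MeasurableSet (Z t ⁻¹' s)) (N : ℕ)
    (hch : ∀ m, m ≤ 2 * N → ∀ x : Fin (m + 1) → X,
      μ {ω | ∀ i : Fin (m + 1), Z (i : ℕ) ω = x i} = ENNReal.ofReal (rho π P m x))
    (hstat : ∀ y, ∑ x, π x * P x y = π y)
    (hπ0 : ∀ x, 0 ≤ π x) (hP0 : ∀ x y, 0 ≤ P x y) (hP1 : ∀ x, ∑ y, P x y = 1)
    (hdist : ∀ x y : X, 1 < dist x y → π x * P x y = 0)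
    (f : X → Y) (K : NNReal) (hK : LipschitzWith K f)
    (t : ℕ) (h1 : 1 ≤ t) (h2 : t ≤ N) :
    ∀ᵐ ω ∂μ, ‖f (Z (2 * t) ω) - gfun P f (Z (2 * t - 1) ω)‖ ≤ 2 * K := by
  have hs1 : 2 * t - 1 + 1 = 2 * t := by omega
  have null1 : μ {ω | 1 < dist (Z (2 * t - 1) ω) (Z (2 * t) ω)} = 0 := by
    have hsub : {ω | 1 < dist (Z (2 * t - 1) ω) (Z (2 * t) ω)}
        ⊆ ⋃ p ∈ {p : X × X | 1 < dist p.1 p.2},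
            {ω | Z (2 * t - 1) ω = p.1 ∧ Z (2 * t - 1 + 1) ω = p.2} := by
      intro ω hω
      apply Set.mem_biUnion (show (Z (2 * t - 1) ω, Z (2 * t) ω) ∈ {p : X × X | 1 < dist p.1 p.2}
        from hω)
      exact ⟨rfl, by rw [hs1]⟩
    apply measure_mono_null hsub
    rw [measure_biUnion_null_iff (Set.to_countable _)]
    intro p hp
    rw [pair_law π P μ Z hZ (2 * t - 1) (hch (2 * t - 1 + 1) (by omega)) hstat hπ0 hP0 p.1 p.2]
    rw [hdist p.1 p.2 hp, ENNReal.ofReal_zero]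
  have null2 : μ {ω | π (Z (2 * t - 1) ω) = 0} = 0 := by
    have hsub : {ω | π (Z (2 * t - 1) ω) = 0}
        ⊆ ⋃ x ∈ {x : X | π x = 0}, {ω | Z (2 * t - 1) ω = x} := by
      intro ω hω
      exact Set.mem_biUnion hω rfl
    apply measure_mono_null hsub
    rw [measure_biUnion_null_iff (Set.to_countable _)]
    intro x hx
    rw [single_law π P μ Z hZ (2 * t - 1) (hch (2 * t - 1) (by omega)) hstat hπ0 hP0 x,
      hx, ENNReal.ofReal_zero]
  have hae1 : ∀ᵐ ω ∂μ, dist (Z (2 * t - 1) ω) (Z (2 * t) ω) ≤ 1 := by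
    rw [ae_iff]
    convert null1 using 2
    ext ω
    simp
  have hae2 : ∀ᵐ ω ∂μ, π (Z (2 * t - 1) ω) ≠ 0 := by
    rw [ae_iff]
    convert null2 using 2
    ext ω
    simp
  filter_upwards [hae1, hae2] with ω hω1 hω2
  have key : f (Z (2 * t) ω) - gfun P f (Z (2 * t - 1) ω)
      = (f (Z (2 * t) ω) - f (Z (2 * t - 1) ω))
        + (f (Z (2 * t - 1) ω) - gfun P f (Z (2 * t - 1) ω)) :=
    (sub_add_sub_cancel _ _ _).symm
  rw [key]
  have hb1 : ‖f (Z (2 * t) ω) - f (Z (2 * t - 1) ω)‖ ≤ K := by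
    have hd := hK.dist_le_mul (Z (2 * t) ω) (Z (2 * t - 1) ω)
    rw [dist_eq_norm] at hd
    calc ‖f (Z (2 * t) ω) - f (Z (2 * t - 1) ω)‖ ≤ K * dist (Z (2 * t) ω) (Z (2 * t - 1) ω) := hd
      _ ≤ (K : ℝ) * 1 := mul_le_mul_of_nonneg_left (by rw [dist_comm]; exact hω1) K.coe_nonneg
      _ = K := mul_one _
  have hb2 : ‖f (Z (2 * t - 1) ω) - gfun P f (Z (2 * t - 1) ω)‖ ≤ K :=
    fg_bound π P hπ0 hP0 hP1 hdist f K hK _ hω2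
  calc ‖_ + _‖ ≤ ‖f (Z (2 * t) ω) - f (Z (2 * t - 1) ω)‖
        + ‖f (Z (2 * t - 1) ω) - gfun P f (Z (2 * t - 1) ω)‖ := norm_add_le _ _
    _ ≤ (K : ℝ) + K := add_le_add hb1 hb2
    _ = 2 * K := by ring

theorem AF_incr (f : X → Y) (Z : ℕ → Ω → X) (t : ℕ) (h1 : 1 ≤ t) (ω : Ω) :
    AF P f Z t ω - AF P f Z (t - 1) ω = f (Z (2 * t) ω) - gfun P f (Z (2 * t - 1) ω) := by
  unfold AF
  rw [show Finset.Icc 1 t = insert t (Finset.Icc 1 (t - 1)) from by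
    ext a; simp [Finset.mem_Icc, Finset.mem_insert]; omega]
  rw [Finset.sum_insert (by simp; omega)]
  exact add_sub_cancel_right _ _

theorem telescope (f : X → Y) (Z : ℕ → Ω → X) (n : ℕ) (hn : 1 ≤ n) (ω : Ω) :
    f (Z (2 * n) ω) - f (Z 0 ω) = AF P f Z n ω - AF P f (fun i => Z (2 * n - i)) n ω := by
  unfold AF
  rw [Finset.sum_sub_distrib, Finset.sum_sub_distrib]
  have hg : ∑ s ∈ Finset.Icc 1 n, gfun P f (Z (2 * n - (2 * s - 1)) ω)
      = ∑ s ∈ Finset.Icc 1 n, gfun P f (Z (2 * s - 1) ω) := by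
    apply Finset.sum_nbij' (fun s => n + 1 - s) (fun s => n + 1 - s)
    · intro a ha; simp only [Finset.mem_Icc] at *; omega
    · intro a ha; simp only [Finset.mem_Icc] at *; omega
    · intro a ha; simp only [Finset.mem_Icc] at *; omega
    · intro a ha; simp only [Finset.mem_Icc] at *; omega
    · intro a ha
      simp only [Finset.mem_Icc] at ha
      rw [show 2 * n - (2 * a - 1) = 2 * (n + 1 - a) - 1 from by omega]
  have hf' : ∑ s ∈ Finset.Icc 1 n, f (Z (2 * n - 2 * s) ω)
      = ∑ s ∈ Finset.Icc 0 (n - 1), f (Z (2 * s) ω) := by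
    apply Finset.sum_nbij' (fun s => n - s) (fun s => n - s)
    · intro a ha; simp only [Finset.mem_Icc] at *; omega
    · intro a ha; simp only [Finset.mem_Icc] at *; omega
    · intro a ha; simp only [Finset.mem_Icc] at *; omega
    · intro a ha; simp only [Finset.mem_Icc] at *; omega
    · intro a ha
      simp only [Finset.mem_Icc] at ha
      rw [show 2 * n - 2 * a = 2 * (n - a) from by omega]
  rw [hg, hf', sub_sub_sub_cancel_right]
  have e1 : insert 0 (Finset.Icc 1 n) = Finset.Icc 0 n := by
    ext a; simp [Finset.mem_Icc]; omega
  have e2 : insert n (Finset.Icc 0 (n - 1)) = Finset.Icc 0 n := by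
    ext a; simp [Finset.mem_Icc]; omega
  have l1 : ∑ s ∈ Finset.Icc 0 n, f (Z (2 * s) ω)
      = f (Z 0 ω) + ∑ s ∈ Finset.Icc 1 n, f (Z (2 * s) ω) := by
    rw [← e1, Finset.sum_insert (by simp)]
  have l2 : ∑ s ∈ Finset.Icc 0 n, f (Z (2 * s) ω)
      = f (Z (2 * n) ω) + ∑ s ∈ Finset.Icc 0 (n - 1), f (Z (2 * s) ω) := by
    rw [← e2, Finset.sum_insert (by simp; omega)]
  have key : f (Z 0 ω) + ∑ s ∈ Finset.Icc 1 n, f (Z (2 * s) ω)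
      = f (Z (2 * n) ω) + ∑ s ∈ Finset.Icc 0 (n - 1), f (Z (2 * s) ω) := l1.symm.trans l2
  apply (sub_eq_sub_iff_add_eq_add).mpr
  calc f (Z (2 * n) ω) + ∑ s ∈ Finset.Icc 0 (n - 1), f (Z (2 * s) ω)
      = f (Z 0 ω) + ∑ s ∈ Finset.Icc 1 n, f (Z (2 * s) ω) := key.symm
    _ = (∑ s ∈ Finset.Icc 1 n, f (Z (2 * s) ω)) + f (Z 0 ω) := add_comm _ _



end NPSSAux

open NPSSAux in
/-- **Martingale decomposition for stationary reversible chains** (Lemma 2.1 / `lem:npss`).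

Let `(X,d)` be a finite metric space, `Y` a real normed vector space (we assume completeness,
as is needed to speak about conditional expectations), and `Z` a stationary reversible Markov
chain on `X` (with initial distribution `π`, transition kernel `P`, satisfying detailed balance)
such that `d(Z₀,Z₁) ≤ 1` almost surely.  Then for every `n ≥ 1` and every `f : X → Y` with
Lipschitz constant `K` there are a forward martingale `A` (w.r.t. the natural filtration
`σ(Z_0,…,Z_{2t})`) and a backward martingale `B` (w.r.t. the natural filtration of the reversed
sequence, `σ(Z_{2n},…,Z_{2n-2t})`) such that `f(Z_{2n}) - f(Z_0) = A_n - B_n` and all increments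
of `A` and of `B` are bounded in norm by `2‖f‖_Lip`. -/
theorem martingale_decomposition
    {X : Type*} [Fintype X] [MetricSpace X]
    {Y : Type*} [NormedAddCommGroup Y] [NormedSpace ℝ Y] [CompleteSpace Y]
    {Ω : Type*} [m0 : MeasurableSpace Ω] (μ : Measure Ω) [IsProbabilityMeasure μ]
    (Z : ℕ → Ω → X) (hZmeas : ∀ t (s : Set X), MeasurableSet (Z t ⁻¹' s))
    (π : X → ℝ) (P : X → X → ℝ)
    (hπ0 : ∀ x, 0 ≤ π x) (hπ1 : ∑ x, π x = 1)
    (hP0 : ∀ x y, 0 ≤ P x y) (hP1 : ∀ x, ∑ y, P x y = 1)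
    (hstat : ∀ y, ∑ x, π x * P x y = π y)
    (hrev : ∀ x y, π x * P x y = π y * P y x)
    (hchain : ∀ (m : ℕ) (x : Fin (m + 1) → X),
      μ {ω | ∀ i : Fin (m + 1), Z (i : ℕ) ω = x i} =
        ENNReal.ofReal (π (x 0) * ∏ i : Fin m, P (x i.castSucc) (x i.succ)))
    (hstep : ∀ᵐ ω ∂μ, dist (Z 0 ω) (Z 1 ω) ≤ 1)
    (f : X → Y) (K : NNReal) (hK : LipschitzWith K f)
    (n : ℕ) (hn : 1 ≤ n) :
    ∃ A B : ℕ → Ω → Y,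
      -- `A` is adapted to the natural filtration of `(Z_0, …, Z_{2n})`
      (∀ t, StronglyMeasurable[⨆ i ∈ Finset.range (2 * t + 1),
          MeasurableSpace.comap (Z i) ⊤] (A t)) ∧
      -- `B` is adapted to the natural filtration of `(Z_{2n}, Z_{2n-1}, …, Z_0)`
      (∀ t, StronglyMeasurable[⨆ i ∈ Finset.range (2 * t + 1),
          MeasurableSpace.comap (Z (2 * n - i)) ⊤] (B t)) ∧
      -- `A` is a (forward) martingale
      (∀ t, t < n →
        μ[A (t + 1)|⨆ i ∈ Finset.range (2 * t + 1),
            MeasurableSpace.comap (Z i) ⊤] =ᵐ[μ] A t) ∧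
      -- `B` is a (backward) martingale
      (∀ t, t < n →
        μ[B (t + 1)|⨆ i ∈ Finset.range (2 * t + 1),
            MeasurableSpace.comap (Z (2 * n - i)) ⊤] =ᵐ[μ] B t) ∧
      -- (1) the decomposition
      (∀ᵐ ω ∂μ, f (Z (2 * n) ω) - f (Z 0 ω) = A n ω - B n ω) ∧
      -- (2) bounded increments
      (∀ t, 1 ≤ t → t ≤ n →
        ∀ᵐ ω ∂μ, ‖A t ω - A (t - 1) ω‖ ≤ 2 * K ∧ ‖B t ω - B (t - 1) ω‖ ≤ 2 * K) := by
  classical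
  set Z' : ℕ → Ω → X := fun i => Z (2 * n - i) with hZ'def
  have hZ'meas : ∀ t (s : Set X), MeasurableSet (Z' t ⁻¹' s) := fun t s => hZmeas _ s
  have hchR : ∀ (m : ℕ) (x : Fin (m + 1) → X),
      μ {ω | ∀ i : Fin (m + 1), Z (i : ℕ) ω = x i} = ENNReal.ofReal (rho π P m x) :=
    fun m x => hchain m x
  have hch : ∀ m, m ≤ 2 * n → ∀ x : Fin (m + 1) → X,
      μ {ω | ∀ i : Fin (m + 1), Z (i : ℕ) ω = x i} = ENNReal.ofReal (rho π P m x) :=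
    fun m _ x => hchR m x
  have hch' : ∀ m, m ≤ 2 * n → ∀ x : Fin (m + 1) → X,
      μ {ω | ∀ i : Fin (m + 1), Z' (i : ℕ) ω = x i} = ENNReal.ofReal (rho π P m x) :=
    chain_rev π P μ Z hZmeas n hchR hrev hπ0 hP0 hP1
  have hdist : ∀ x y : X, 1 < dist x y → π x * P x y = 0 := by
    intro x y hxy
    have h1 := hchain 1 ![x, y]
    have hsub : {ω | ∀ i : Fin 2, Z (i : ℕ) ω = ![x, y] i}
        ⊆ {ω | ¬ dist (Z 0 ω) (Z 1 ω) ≤ 1} := by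
      intro ω hω
      simp only [Set.mem_setOf_eq]
      rw [show Z 0 ω = x from by simpa using hω 0, show Z 1 ω = y from by simpa using hω 1]
      exact not_le.mpr hxy
    have hnull0 : μ {ω | ¬ dist (Z 0 ω) (Z 1 ω) ≤ 1} = 0 := by
      rw [ae_iff] at hstep
      exact hstep
    have hnull : μ {ω | ∀ i : Fin 2, Z (i : ℕ) ω = ![x, y] i} = 0 :=
      measure_mono_null hsub hnull0
    rw [h1] at hnull
    have hval : π (![x, y] 0) * ∏ i : Fin 1, P (![x, y] i.castSucc) (![x, y] i.succ)
        = π x * P x y := by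
      rw [Fin.prod_univ_one]
      simp
    rw [hval] at hnull
    exact le_antisymm (ENNReal.ofReal_eq_zero.mp hnull) (mul_nonneg (hπ0 x) (hP0 x y))
  refine ⟨AF P f Z, AF P f Z', fun t => smAF P f Z t, fun t => smAF P f Z' t,
    fun t ht => mart_AF π P μ Z hZmeas n hch hπ0 hP0 hP1 f t ht,
    fun t ht => mart_AF π P μ Z' hZ'meas n hch' hπ0 hP0 hP1 f t ht,
    Filter.Eventually.of_forall (fun ω => telescope P f Z n hn ω), ?_⟩
  intro t h1 h2
  have hbA := bound_AF π P μ Z hZmeas n hch hstat hπ0 hP0 hP1 hdist f K hK t h1 h2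
  have hbB := bound_AF π P μ Z' hZ'meas n hch' hstat hπ0 hP0 hP1 hdist f K hK t h1 h2
  filter_upwards [hbA, hbB] with ω hA hB
  constructor
  · rw [AF_incr P f Z t h1 ω]
    exact hA
  · rw [AF_incr P f Z' t h1 ω]
    exact hB

end
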